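/- Let S ⊆ ℕ^d be a generalized numerical semigroup satisfying: for each j, the numerical semigroup S_j = {a : a·e_j ∈ S} has Frobenius bound F^(j) = max{F(S_j), 0}, and for each pair i ≠ j there is n_i^(j) ∈ ℕ with e_i + n_i^(j)·e_j ∈ S. Define v ∈ ℕ^d by v^(j) = Σ_{i ≠ j} F^(i)·n_i^(j) + F^(j). Then every gap of S is componentwise ≤ v, i.e., H(S) ⊆ B(v) = {x ∈ ℕ^d : x ≤ v}. -/

import Mathlib

theorem stmt16 {d : ℕ} (S : Set (Fin d → ℕ))
    (h0 : (0 : Fin d → ℕ) ∈ S) (hadd : ∀ a ∈ S, ∀ b ∈ S, a + b ∈ S)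
    (hfin : Sᶜ.Finite)
    (F : Fin d → ℕ)
    (hF : ∀ j : Fin d, (∀ a : ℕ, F j < a → a • Pi.single j (1 : ℕ) ∈ S) ∧
      (F j = 0 ∨ (F j) • Pi.single j (1 : ℕ) ∉ S))
    (n : Fin d → Fin d → ℕ)
    (hn : ∀ i j : Fin d, i ≠ j →
      Pi.single i (1 : ℕ) + (n i j) • Pi.single j (1 : ℕ) ∈ S)
    (v : Fin d → ℕ)
    (hv : ∀ j : Fin d, v j = (∑ i ∈ Finset.univ.erase j, F i * n i j) + F j) :
    ∀ x : Fin d → ℕ, x ∉ S → x ≤ v := by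
  have hsmul : ∀ (k : ℕ) (s : Fin d → ℕ), s ∈ S → k • s ∈ S := by
    intro k s hs
    induction k with
    | zero => simpa using h0
    | succ m ih => rw [succ_nsmul]; exact hadd _ ih _ hs
  have hsum : ∀ (t : Finset (Fin d)) (f : Fin d → (Fin d → ℕ)),
      (∀ i ∈ t, f i ∈ S) → ∑ i ∈ t, f i ∈ S := by
    intro t
    induction t using Finset.induction with
    | empty => intro f _; simpa using h0
    | insert _ _ hnot ih =>
      intro f hf
      rw [Finset.sum_insert hnot]
      exact hadd _ (hf _ (Finset.mem_insert_self _ _)) _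
        (ih f fun i hi => hf i (Finset.mem_insert_of_mem hi))
  intro x hx
  by_contra hle
  rw [Pi.le_def] at hle
  push_neg at hle
  obtain ⟨j, hj⟩ := hle
  apply hx
  set A := (Finset.univ.erase j).filter (fun i => x i ≤ F i) with hA
  set B := (Finset.univ.erase j).filter (fun i => ¬ x i ≤ F i) with hB
  have hsle : ∑ i ∈ A, x i * n i j ≤ ∑ i ∈ Finset.univ.erase j, F i * n i j := by
    calc ∑ i ∈ A, x i * n i j ≤ ∑ i ∈ A, F i * n i j :=
        Finset.sum_le_sum (fun i hi => Nat.mul_le_mul_right _ ((Finset.mem_filter.mp hi).2))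
      _ ≤ ∑ i ∈ Finset.univ.erase j, F i * n i j :=
        Finset.sum_le_sum_of_subset (Finset.filter_subset _ _)
  set s := ∑ i ∈ A, x i * n i j with hs
  have hvj := hv j
  have hsx : s ≤ x j := by omega
  set r := x j - s with hr
  have hrF : F j < r := by omega
  have hxeq : x = (∑ i ∈ B, (x i) • Pi.single i (1 : ℕ)) +
      ((∑ i ∈ A, (x i) • (Pi.single i (1:ℕ) + (n i j) • Pi.single j (1:ℕ))) +
       r • Pi.single j (1 : ℕ)) := by
    funext k
    simp only [Pi.add_apply, Finset.sum_apply, Pi.smul_apply, smul_eq_mul,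
      Pi.single_apply, mul_ite, mul_one, mul_zero, mul_add]
    by_cases hk : k = j
    · subst hk
      have h1 : ∑ i ∈ B, (if k = i then x i else 0) = 0 := by
        apply Finset.sum_eq_zero
        intro i hi
        exact if_neg (Ne.symm (Finset.mem_erase.mp (Finset.mem_filter.mp hi).1).1)
      have h2 : ∑ i ∈ A, ((if k = i then x i else 0) + if k = k then x i * n i k else 0) = s := by
        rw [hs]
        apply Finset.sum_congr rfl
        intro i hi
        rw [if_neg (Ne.symm (Finset.mem_erase.mp (Finset.mem_filter.mp hi).1).1),
          if_pos rfl, zero_add]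
      rw [h1, h2, if_pos rfl, zero_add]
      omega
    · have h2 : ∑ i ∈ A, ((if k = i then x i else 0) + if k = j then x i * n i j else 0)
          = ∑ i ∈ A, (if k = i then x i else 0) := by
        apply Finset.sum_congr rfl
        intro i _
        rw [if_neg hk, add_zero]
      rw [h2, if_neg hk, add_zero, Finset.sum_ite_eq, Finset.sum_ite_eq]
      by_cases hkF : x k ≤ F k
      · have h3 : k ∈ A := by simp [hA, Finset.mem_filter, Finset.mem_erase, hk, hkF]
        have h4 : k ∉ B := by simp [hB, Finset.mem_filter, hkF]
        simp [h3, h4]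
      · have h3 : k ∉ A := by simp [hA, Finset.mem_filter, hkF]
        have h4 : k ∈ B := by simp [hB, Finset.mem_filter, Finset.mem_erase, hk]; omega
        simp [h3, h4]
  rw [hxeq]
  refine hadd _ ?_ _ (hadd _ ?_ _ ?_)
  · refine hsum _ _ (fun i hi => ?_)
    exact (hF i).1 _ (by simpa using not_le.mp (Finset.mem_filter.mp hi).2)
  · refine hsum _ _ (fun i hi => ?_)
    exact hsmul _ _ (hn i j (Finset.mem_erase.mp (Finset.mem_filter.mp hi).1).1)
  · exact (hF j).1 _ hrF
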